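/- Let Γ be an infinite virtually cyclic group acting by homeomorphisms on a compact Hausdorff space X, and suppose the action has the marker property. Then for every finite subset E ⊆ Γ there exist open sets U_0, U_1 ⊆ X with U_0 ∪ U_1 = X such that the sets F(U_0, E) and F(U_1, E) are both finite. -/

import Mathlib

open Pointwise

/-- The set F(U,E): elements `g = gₙ⋯g₁` with each `gⱼ ∈ E` such that for some `x ∈ U`
all partial translates `gⱼ⋯g₁ • x` (j = 1,…,n) remain in `U`. -/
def dynF {Γ X : Type*} [Group Γ] [MulAction Γ X] (U : Set X) (E : Set Γ) : Set Γ :=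
  {g | ∃ L : List Γ, L ≠ [] ∧ (∀ h ∈ L, h ∈ E) ∧ g = L.reverse.prod ∧
    ∃ x ∈ U, ∀ j : ℕ, 1 ≤ j → j ≤ L.length → (L.take j).reverse.prod • x ∈ U}

/-- The marker property for an action. -/
def MarkerProperty (Γ X : Type*) [Group Γ] [MulAction Γ X] [TopologicalSpace X] : Prop :=
  ∀ F : Finset Γ, ∃ U : Set X, IsOpen U ∧
    (F : Set Γ).PairwiseDisjoint (fun g => g • U) ∧ (⋃ g : Γ, g • U) = Set.univ

/-- The dynamic asymptotic dimension is at most `d`. -/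
def DadLE (Γ X : Type*) [Group Γ] [MulAction Γ X] [TopologicalSpace X] (d : ℕ) : Prop :=
  ∀ E : Finset Γ, ∃ U : Fin (d + 1) → Set X, (∀ i, IsOpen (U i)) ∧
    (⋃ i, U i) = Set.univ ∧ ∀ i, (dynF (U i) (E : Set Γ)).Finite

/-- The dynamic asymptotic dimension, as an extended natural number (`⊤` if no `d` works). -/
noncomputable def dad (Γ X : Type*) [Group Γ] [MulAction Γ X] [TopologicalSpace X] : ℕ∞ :=
  sInf ((fun d : ℕ => (d : ℕ∞)) '' {d : ℕ | DadLE Γ X d})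

/-- A group is virtually cyclic if it has a cyclic subgroup of finite index. -/
def IsVirtuallyCyclic (Γ : Type*) [Group Γ] : Prop :=
  ∃ H : Subgroup Γ, IsCyclic H ∧ H.FiniteIndex

/-- The covering dimension of `X` is at most `n`: every open cover admits an open
refinement covering `X` in which every point belongs to at most `n+1` members. -/
def CovDimLE (X : Type*) [TopologicalSpace X] (n : ℕ) : Prop :=
  ∀ 𝒰 : Set (Set X), (∀ U ∈ 𝒰, IsOpen U) → ⋃₀ 𝒰 = Set.univ →
    ∃ 𝒱 : Set (Set X), (∀ V ∈ 𝒱, IsOpen V) ∧ ⋃₀ 𝒱 = Set.univ ∧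
      (∀ V ∈ 𝒱, ∃ U ∈ 𝒰, V ⊆ U) ∧
      ∀ x : X, ∃ s : Finset (Set X), {V ∈ 𝒱 | x ∈ V} ⊆ ↑s ∧ s.card ≤ n + 1

open Subgroup Function

lemma exists_gen (Γ : Type*) [Group Γ] [Infinite Γ] (hvc : IsVirtuallyCyclic Γ) :
    ∃ t : Γ, Injective (fun m : ℤ => t ^ m) ∧ (zpowers t).Normal ∧ (zpowers t).FiniteIndex := by
  obtain ⟨H₀, hcyc, hfi⟩ := hvc
  let K := H₀.normalCore
  haveI : K.FiniteIndex := inferInstance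
  haveI : IsCyclic ↥(K.subgroupOf H₀) := inferInstance
  haveI hKc : IsCyclic ↥K :=
    isCyclic_of_surjective (subgroupOfEquivOfLe (normalCore_le H₀))
      (subgroupOfEquivOfLe (normalCore_le H₀)).surjective
  haveI : Finite (Γ ⧸ K) := inferInstance
  haveI hKinf : Infinite ↥K := by
    by_contra hfin
    rw [not_infinite_iff_finite] at hfin
    haveI := hfin
    exact absurd ((Equiv.infinite_iff (Subgroup.groupEquivQuotientProdSubgroup (s := K))).mp ‹Infinite Γ›) (by rw [not_infinite_iff_finite]; infer_instance)
  obtain ⟨g, hg⟩ := hKc.exists_generator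
  have hzp : zpowers (g : Γ) = K := by
    apply le_antisymm
    · exact zpowers_le.mpr g.2
    · intro x hx
      obtain ⟨m, hm⟩ := hg ⟨x, hx⟩
      exact ⟨m, congrArg Subtype.val hm⟩
  refine ⟨(g : Γ), ?_, ?_, ?_⟩
  · rw [injective_zpow_iff_not_isOfFinOrder, ← infinite_zpowers, hzp]
    rw [← Set.infinite_coe_iff]
    exact hKinf
  · rw [hzp]; infer_instance
  · rw [hzp]; infer_instance

section coords

variable {Γ : Type*} [Group Γ] (t : Γ)

noncomputable def rho (g : Γ) : Γ := (QuotientGroup.mk (s := zpowers t) g).out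

lemma rho_mem (g : Γ) : (rho t g)⁻¹ * g ∈ zpowers t :=
  QuotientGroup.eq.mp (QuotientGroup.out_eq' (QuotientGroup.mk (s := zpowers t) g))

noncomputable def phi (g : Γ) : ℤ := Classical.choose (mem_zpowers_iff.mp (rho_mem t g))

lemma phi_spec (g : Γ) : t ^ phi t g = (rho t g)⁻¹ * g :=
  Classical.choose_spec (mem_zpowers_iff.mp (rho_mem t g))

lemma decomp (g : Γ) : rho t g * t ^ phi t g = g := by
  rw [phi_spec]; group

lemma rho_eq {g g' : Γ} (h : QuotientGroup.mk (s := zpowers t) g = QuotientGroup.mk g') :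
    rho t g = rho t g' := congrArg Quotient.out h

lemma rho_mul_zpow (g : Γ) (m : ℤ) : rho t (g * t ^ m) = rho t g := by
  refine rho_eq t ?_
  rw [QuotientGroup.eq]
  simpa using (zpowers t).zpow_mem (mem_zpowers t) m

lemma rho_rho (g : Γ) : rho t (rho t g) = rho t g := by
  refine rho_eq t ?_
  exact QuotientGroup.out_eq' _

variable {t}
variable (hinj : Injective (fun m : ℤ => t ^ m))

include hinj in
lemma phi_unique {g : Γ} {m : ℤ} (h : t ^ m = (rho t g)⁻¹ * g) : phi t g = m :=
  hinj ((phi_spec t g).trans h.symm)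

include hinj in
lemma phi_mul_zpow (g : Γ) (m : ℤ) : phi t (g * t ^ m) = phi t g + m := by
  apply phi_unique hinj
  rw [rho_mul_zpow, zpow_add, phi_spec]
  group

include hinj in
lemma phi_mul (h g : Γ) : phi t (h * g) = phi t (h * rho t g) + phi t g := by
  conv_lhs => rw [← decomp t g, ← mul_assoc]
  rw [phi_mul_zpow hinj]

end coords

section kappa
variable {Γ : Type*} [Group Γ] {t : Γ}

lemma conj_mem' (hn : (zpowers t).Normal) (g : Γ) : g⁻¹ * t * g ∈ zpowers t := by
  have := hn.conj_mem t (mem_zpowers t) g⁻¹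
  simpa using this

noncomputable def kappa (hn : (zpowers t).Normal) (g : Γ) : ℤ :=
  Classical.choose (mem_zpowers_iff.mp (conj_mem' hn g))

lemma kappa_spec (hn : (zpowers t).Normal) (g : Γ) : t ^ kappa hn g = g⁻¹ * t * g :=
  Classical.choose_spec (mem_zpowers_iff.mp (conj_mem' hn g))

lemma kappa_zpow (hn : (zpowers t).Normal) (g : Γ) (m : ℤ) :
    t ^ (kappa hn g * m) = g⁻¹ * t ^ m * g := by
  have h1 : g⁻¹ * t * g = g⁻¹ * t * g⁻¹⁻¹ := by group
  rw [zpow_mul, kappa_spec, h1, conj_zpow, inv_inv]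

variable (hinj : Function.Injective (fun m : ℤ => t ^ m))

include hinj in
lemma kappa_unit (hn : (zpowers t).Normal) (g : Γ) : kappa hn g = 1 ∨ kappa hn g = -1 := by
  have h : t ^ (kappa hn g * kappa hn g⁻¹) = t ^ (1 : ℤ) := by
    rw [kappa_zpow, kappa_spec]
    group
  have := hinj h
  exact Int.isUnit_iff.mp (IsUnit.of_mul_eq_one _ this)

include hinj in
lemma kappa_abs (hn : (zpowers t).Normal) (g : Γ) (z : ℤ) : |kappa hn g * z| = |z| := by
  rcases kappa_unit hinj hn g with h | h <;> rw [h] <;> simp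

include hinj in
lemma kappa_sq (hn : (zpowers t).Normal) (g : Γ) : kappa hn g * kappa hn g = 1 := by
  rcases kappa_unit hinj hn g with h | h <;> rw [h] <;> ring

include hinj in
lemma phi_mul_right (hn : (zpowers t).Normal) (g a : Γ) :
    phi t (g * a) = phi t (rho t g * a) + kappa hn a * phi t g := by
  have key : g * a = (rho t g * a) * t ^ (kappa hn a * phi t g) := by
    rw [kappa_zpow]
    conv_lhs => rw [← decomp t g]
    group
  rw [key, phi_mul_zpow hinj]

end kappa

section finite
variable {Γ : Type*} [Group Γ] {t : Γ}
variable (hinj : Function.Injective (fun m : ℤ => t ^ m))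
variable (hfi : (zpowers t).FiniteIndex)

include hfi in
lemma range_rho_finite : (Set.range (rho t)).Finite := by
  haveI := hfi
  haveI : Finite (Γ ⧸ zpowers t) := inferInstance
  exact (Set.finite_range Quotient.out).subset (by rintro _ ⟨g, rfl⟩; exact ⟨_, rfl⟩)

include hfi in
lemma window_finite (B : ℤ) : {g : Γ | |phi t g| ≤ B}.Finite := by
  haveI := hfi
  haveI : Finite (Γ ⧸ zpowers t) := inferInstance
  have hfin : (Set.univ ×ˢ Set.Icc (-B) B : Set ((Γ ⧸ zpowers t) × ℤ)).Finite :=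
    Set.finite_univ.prod (Set.finite_Icc _ _)
  have hsub : {g : Γ | |phi t g| ≤ B} ⊆
      (fun g : Γ => ((QuotientGroup.mk (s := zpowers t) g), phi t g)) ⁻¹'
        (Set.univ ×ˢ Set.Icc (-B) B) := by
    intro g hg
    exact ⟨Set.mem_univ _, abs_le.mp hg⟩
  refine Set.Finite.subset (Set.Finite.preimage ?_ hfin) hsub
  intro g _ g' _ h
  have h1 : rho t g = rho t g' := rho_eq t (congrArg Prod.fst h)
  have h2 : phi t g = phi t g' := congrArg Prod.snd h
  rw [← decomp t g, ← decomp t g', h1, h2]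

lemma phi_bound_of_finite (t : Γ) (s : Set Γ) (hs : s.Finite) :
    ∃ N : ℤ, 0 ≤ N ∧ ∀ g ∈ s, |phi t g| ≤ N := by
  obtain ⟨N₀, hN₀⟩ := (hs.image (fun g => |phi t g|)).bddAbove
  refine ⟨max N₀ 0, le_max_right _ _, fun g hg => ?_⟩
  exact le_trans (hN₀ (Set.mem_image_of_mem _ hg)) (le_max_left _ _)

end finite


/-- For an infinite virtually cyclic group acting on a compact Hausdorff
space with the marker property, every finite `E` admits a two-set open cover with
finite `F(Uᵢ, E)`. -/
theorem exists_two_set_cover_of_markerProperty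
    (Γ X : Type*) [Group Γ] [Infinite Γ]
    [TopologicalSpace X] [CompactSpace X] [T2Space X]
    [MulAction Γ X] [ContinuousConstSMul Γ X]
    (hvc : IsVirtuallyCyclic Γ) (hmarker : MarkerProperty Γ X) :
    ∀ E : Finset Γ, ∃ U₀ U₁ : Set X, IsOpen U₀ ∧ IsOpen U₁ ∧ U₀ ∪ U₁ = Set.univ ∧
      (dynF U₀ (E : Set Γ)).Finite ∧ (dynF U₁ (E : Set Γ)).Finite := by
  intro E
  obtain ⟨t, hinj, hn, hfi⟩ := exists_gen Γ hvc
  classical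
  have hRfin : (Set.range (rho t)).Finite := range_rho_finite hfi
  obtain ⟨D1, hD1nn, hD1⟩ := phi_bound_of_finite t
    ((fun p : Γ × Γ => p.1 * p.2) '' ((Set.range (rho t)) ×ˢ (Set.range (rho t))))
    ((hRfin.prod hRfin).image _)
  obtain ⟨N, hNnn, hN⟩ := phi_bound_of_finite t
    ((fun p : Γ × Γ => p.1 * p.2) '' ((E : Set Γ) ×ˢ (Set.range (rho t))))
    ((E.finite_toSet.prod hRfin).image _)
  set T' : ℤ := N + 2 * D1 with hT'
  set Dset : Set Γ := {g : Γ | |phi t g| ≤ T'} with hDsetdef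
  have hDfin : Dset.Finite := window_finite hfi T'
  have hFmfin : ({1} ∪ (Dset⁻¹ * (E : Set Γ)⁻¹ * Dset)).Finite :=
    (Set.finite_singleton 1).union (((hDfin.inv.mul (E.finite_toSet.inv)).mul hDfin))
  obtain ⟨U, hUopen, hUdisj, hUcover⟩ := hmarker hFmfin.toFinset
  have hsep : ∀ δ : Γ, δ ∈ Dset⁻¹ * (E : Set Γ)⁻¹ * Dset → δ ≠ 1 →
      Disjoint U (δ • U) := by
    intro δ hδ hδ1
    have h1 : (1 : Γ) ∈ (hFmfin.toFinset : Set Γ) := by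
      simp [Set.Finite.coe_toFinset]
    have h2 : δ ∈ (hFmfin.toFinset : Set Γ) := by
      rw [Set.Finite.coe_toFinset]
      exact Set.mem_union_right _ hδ
    have h3 : Disjoint ((1 : Γ) • U) (δ • U) := hUdisj h1 h2 (fun h => hδ1 h.symm)
    simpa using h3
  obtain ⟨S₀, hS₀⟩ := IsCompact.elim_finite_subcover isCompact_univ
    (fun g : Γ => g • U) (fun g => hUopen.smul g) (by rw [hUcover])
  have hS₀' : Set.univ ⊆ ⋃ i : ↥S₀, (i : Γ) • U := by
    intro y hy
    obtain ⟨g, hg, hmem⟩ := Set.mem_iUnion₂.mp (hS₀ hy)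
    exact Set.mem_iUnion.mpr ⟨⟨g, hg⟩, hmem⟩
  obtain ⟨v, hvcov, hvopen, hvcl⟩ := exists_subset_iUnion_closure_subset
    isClosed_univ (u := fun i : ↥S₀ => (i : Γ) • U) (fun i => hUopen.smul _)
    (fun x _ => Set.toFinite _) hS₀'
  set C : Set X := ⋃ i : ↥S₀, ((i : Γ)⁻¹ • closure (v i)) with hCdef
  have hCclosed : IsClosed C := isClosed_iUnion_of_finite
    (fun i => (isClosed_closure).smul _)
  have hCU : C ⊆ U := by
    refine Set.iUnion_subset fun i => ?_
    have h1 : (i : Γ)⁻¹ • closure (v i) ⊆ (i : Γ)⁻¹ • ((i : Γ) • U) :=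
      Set.smul_set_mono (hvcl i)
    rwa [inv_smul_smul] at h1
  have hCcover : ∀ y : X, ∃ h : Γ, h ∈ S₀ ∧ y ∈ h • C := by
    intro y
    obtain ⟨i, hy⟩ := Set.mem_iUnion.mp (hvcov (Set.mem_univ y))
    refine ⟨(i : Γ), i.2, ?_⟩
    have h1 : y ∈ (i : Γ) • ((i : Γ)⁻¹ • closure (v i)) := by
      rw [smul_inv_smul]
      exact subset_closure hy
    exact Set.smul_set_mono
      (Set.subset_iUnion (fun i : ↥S₀ => ((i : Γ)⁻¹ • closure (v i))) i) h1
  obtain ⟨M, hMnn, hM⟩ := phi_bound_of_finite t (S₀ : Set Γ) S₀.finite_toSet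
  refine ⟨⋃ d ∈ Dset, d • U, (⋃ d ∈ Dset, d • C)ᶜ, ?_, ?_, ?_, ?_, ?_⟩
  · exact isOpen_biUnion fun d _ => hUopen.smul d
  · exact (hDfin.isClosed_biUnion fun d _ => hCclosed.smul d).isOpen_compl
  · apply Set.eq_univ_of_univ_subset
    intro x _
    by_cases hxm : x ∈ ⋃ d ∈ Dset, d • C
    · left
      obtain ⟨d, hd, hmem⟩ := Set.mem_iUnion₂.mp hxm
      exact Set.mem_biUnion hd (Set.smul_set_mono hCU hmem)
    · right
      exact hxm
  · -- finiteness of F(U₀, E)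
    refine Set.Finite.subset (hDfin.mul hDfin.inv) ?_
    rintro g ⟨L, hLne, hLE, rfl, x, hx, hchain⟩
    have hstep : ∀ (j : ℕ) (hj : j < L.length), (L.take (j+1)).reverse.prod
        = L[j]'hj * (L.take j).reverse.prod := by
      intro j hj
      rw [List.take_succ, List.getElem?_eq_getElem hj]
      rw [List.reverse_append, List.prod_append]
      simp
    have hxU0 : ∀ j ≤ L.length, (L.take j).reverse.prod • x ∈ ⋃ d ∈ Dset, d • U := by
      intro j hj
      rcases Nat.eq_zero_or_pos j with rfl | hj1
      · simpa using hx
      · exact hchain j hj1 hj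
    have hdex : ∀ j : ℕ, ∃ d : Γ, j ≤ L.length →
        (d ∈ Dset ∧ (L.take j).reverse.prod • x ∈ d • U) := by
      intro j
      by_cases hj : j ≤ L.length
      · obtain ⟨d, hd, hmem⟩ := Set.mem_iUnion₂.mp (hxU0 j hj)
        exact ⟨d, fun _ => ⟨hd, hmem⟩⟩
      · exact ⟨1, fun h => absurd h hj⟩
    choose d hd using hdex
    have key : ∀ j ≤ L.length, ((L.take j).reverse.prod)⁻¹ * d j = d 0 := by
      intro j
      induction j with
      | zero => intro _; simp
      | succ j ih =>
        intro hj1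
        have hj : j ≤ L.length := Nat.le_of_succ_le hj1
        have hjlt : j < L.length := hj1
        have hde : (L.take (j+1)).reverse.prod = L[j]'hjlt * (L.take j).reverse.prod :=
          hstep j hjlt
        have hLj : L[j]'hjlt ∈ (E : Set Γ) := hLE _ (List.getElem_mem hjlt)
        have hm1 : ((d j)⁻¹ * (L.take j).reverse.prod) • x ∈ U := by
          rw [← smul_smul]
          exact Set.mem_smul_set_iff_inv_smul_mem.mp (hd j hj).2
        have hm2 : ((d (j+1))⁻¹ * (L.take (j+1)).reverse.prod) • x ∈ U := by
          rw [← smul_smul]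
          exact Set.mem_smul_set_iff_inv_smul_mem.mp (hd (j+1) hj1).2
        have hu : (d j)⁻¹ * (L.take j).reverse.prod
            = (d (j+1))⁻¹ * (L.take (j+1)).reverse.prod := by
          by_contra hne
          set u₁ := (d j)⁻¹ * (L.take j).reverse.prod with hu₁
          set u₂ := (d (j+1))⁻¹ * (L.take (j+1)).reverse.prod with hu₂
          have hδmem : u₁ * u₂⁻¹ ∈ Dset⁻¹ * (E : Set Γ)⁻¹ * Dset := by
            refine ⟨(d j)⁻¹ * (L[j]'hjlt)⁻¹, ⟨(d j)⁻¹, Set.inv_mem_inv.mpr (hd j hj).1,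
              (L[j]'hjlt)⁻¹, Set.inv_mem_inv.mpr hLj, rfl⟩, d (j+1), (hd (j+1) hj1).1, ?_⟩
            rw [hu₁, hu₂, hde]
            group
          have hδ1 : u₁ * u₂⁻¹ ≠ 1 := fun h => hne (by rwa [mul_inv_eq_one] at h)
          have hdisj := hsep _ hδmem hδ1
          have hmem2 : u₁ • x ∈ (u₁ * u₂⁻¹) • U := by
            rw [← smul_smul]
            refine Set.smul_mem_smul_set ?_
            refine Set.mem_smul_set_iff_inv_smul_mem.mpr ?_
            rw [inv_inv]
            exact hm2
          exact Set.disjoint_left.mp hdisj hm1 hmem2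
        have hih := ih hj
        rw [← hih]
        have h5 := congrArg Inv.inv hu
        simp only [mul_inv_rev, inv_inv] at h5
        exact h5.symm
    have hkey := key L.length le_rfl
    rw [List.take_length] at hkey
    refine ⟨d L.length, (hd L.length le_rfl).1, (d 0)⁻¹, Set.inv_mem_inv.mpr (hd 0 (Nat.zero_le _)).1, ?_⟩
    rw [← hkey]
    group
  · -- finiteness of F(U₁, E)
    refine Set.Finite.subset (window_finite hfi (|phi t 1| + 2 * M + 1)) ?_
    rintro g ⟨L, hLne, hLE, rfl, x, hx, hchain⟩
    have hstep : ∀ (j : ℕ) (hj : j < L.length), (L.take (j+1)).reverse.prod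
        = L[j]'hj * (L.take j).reverse.prod := by
      intro j hj
      rw [List.take_succ, List.getElem?_eq_getElem hj]
      rw [List.reverse_append, List.prod_append]
      simp
    have hxU1 : ∀ j ≤ L.length, (L.take j).reverse.prod • x ∈ (⋃ d ∈ Dset, d • C)ᶜ := by
      intro j hj
      rcases Nat.eq_zero_or_pos j with rfl | hj1
      · simpa using hx
      · exact hchain j hj1 hj
    set A : Set Γ := {a : Γ | x ∈ a • C} with hAdef
    set p : Γ → ℤ := fun a => -(kappa hn a * phi t (rho t 1 * a)) with hpdef
    have hcomp : ∀ s a : Γ, |phi t (s * a)|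
        = |phi t s - (-(kappa hn a * phi t (rho t s * a)))| := by
      intro s a
      have h1 : kappa hn a * phi t (s * a)
          = phi t s - (-(kappa hn a * phi t (rho t s * a))) := by
        rw [phi_mul_right hinj hn s a]
        have h2 : kappa hn a * (phi t (rho t s * a) + kappa hn a * phi t s)
            = kappa hn a * phi t (rho t s * a) + (kappa hn a * kappa hn a) * phi t s := by
          ring
        rw [h2, kappa_sq hinj hn a]
        ring
      rw [← h1, kappa_abs hinj hn]
    have hq : ∀ s a : Γ, |(-(kappa hn a * phi t (rho t s * a))) - p a| ≤ 2 * D1 := by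
      intro s a
      have e1 : phi t (rho t s * a) = phi t (rho t s * rho t a) + phi t a :=
        phi_mul hinj _ _
      have e2 : phi t (rho t 1 * a) = phi t (rho t 1 * rho t a) + phi t a :=
        phi_mul hinj _ _
      have b1 : |phi t (rho t s * rho t a)| ≤ D1 :=
        hD1 _ ⟨(rho t s, rho t a), ⟨⟨s, rfl⟩, ⟨a, rfl⟩⟩, rfl⟩
      have b2 : |phi t (rho t 1 * rho t a)| ≤ D1 :=
        hD1 _ ⟨(rho t 1, rho t a), ⟨⟨1, rfl⟩, ⟨a, rfl⟩⟩, rfl⟩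
      have h3 : (-(kappa hn a * phi t (rho t s * a))) - p a
          = kappa hn a * (phi t (rho t 1 * rho t a) - phi t (rho t s * rho t a)) := by
        rw [hpdef]
        simp only []
        rw [e1, e2]
        ring
      rw [h3, kappa_abs hinj hn]
      have h4 := abs_sub (phi t (rho t 1 * rho t a)) (phi t (rho t s * rho t a))
      linarith
    have havoidp : ∀ j ≤ L.length, ∀ a ∈ A,
        N < |phi t ((L.take j).reverse.prod) - p a| := by
      intro j hj a ha
      have h1 : T' < |phi t ((L.take j).reverse.prod * a)| := by
        by_contra hle
        push_neg at hle
        have hdmem : ((L.take j).reverse.prod * a) ∈ Dset := hle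
        have h2 : (L.take j).reverse.prod • x ∈ ((L.take j).reverse.prod * a) • C := by
          rw [← smul_smul]
          exact Set.smul_mem_smul_set ha
        exact (hxU1 j hj) (Set.mem_biUnion hdmem h2)
      rw [hcomp] at h1
      have h2 := hq ((L.take j).reverse.prod) a
      have h3 : |phi t ((L.take j).reverse.prod) - (-(kappa hn a * phi t (rho t ((L.take j).reverse.prod) * a)))|
          ≤ |phi t ((L.take j).reverse.prod) - p a|
            + |(-(kappa hn a * phi t (rho t ((L.take j).reverse.prod) * a))) - p a| := by
        have h4 := abs_add_le (phi t ((L.take j).reverse.prod) - p a)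
          (p a - (-(kappa hn a * phi t (rho t ((L.take j).reverse.prod) * a))))
        rw [abs_sub_comm (-(kappa hn a * phi t (rho t ((L.take j).reverse.prod) * a)))]
        calc |phi t ((L.take j).reverse.prod) - (-(kappa hn a * phi t (rho t ((L.take j).reverse.prod) * a)))|
            = |(phi t ((L.take j).reverse.prod) - p a) + (p a - (-(kappa hn a * phi t (rho t ((L.take j).reverse.prod) * a))))| := by ring_nf
          _ ≤ _ := h4
      rw [hT'] at h1
      linarith
    have hdens : ∀ w : ℤ, ∃ a ∈ A, |w - p a| ≤ M := by
      intro w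
      set gw := rho t 1 * t ^ (w - phi t (rho t 1)) with hgwdef
      obtain ⟨h, hhS, hmem⟩ := hCcover (gw • x)
      refine ⟨gw⁻¹ * h, ?_, ?_⟩
      · have h1 := Set.smul_mem_smul_set (a := gw⁻¹) hmem
        rw [inv_smul_smul, smul_smul] at h1
        exact h1
      · have hga : gw * (gw⁻¹ * h) = h := by group
        have h2 : |phi t (gw * (gw⁻¹ * h))| ≤ M := by rw [hga]; exact hM h hhS
        rw [hcomp] at h2
        have hrgw : rho t gw = rho t 1 := by rw [hgwdef, rho_mul_zpow, rho_rho]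
        have hpgw : phi t gw = w := by rw [hgwdef, phi_mul_zpow hinj]; ring
        rw [hrgw, hpgw] at h2
        exact h2
    obtain ⟨ap, hapA, hap⟩ := hdens (phi t 1 + M + 1)
    obtain ⟨am, hamA, ham⟩ := hdens (phi t 1 - M - 1)
    obtain ⟨hap1, hap2⟩ := abs_le.mp hap
    obtain ⟨ham1, ham2⟩ := abs_le.mp ham
    have hdiffN : ∀ j : ℕ, j < L.length →
        |phi t ((L.take (j+1)).reverse.prod) - phi t ((L.take j).reverse.prod)| ≤ N := by
      intro j hj
      rw [hstep j hj, phi_mul hinj]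
      have h1 : |phi t (L[j]'hj * rho t ((L.take j).reverse.prod))| ≤ N :=
        hN _ ⟨(L[j]'hj, rho t ((L.take j).reverse.prod)),
          ⟨hLE _ (List.getElem_mem hj), ⟨_, rfl⟩⟩, rfl⟩
      simpa using h1
    have keyind : ∀ j ≤ L.length, p am < phi t ((L.take j).reverse.prod)
        ∧ phi t ((L.take j).reverse.prod) < p ap := by
      intro j
      induction j with
      | zero =>
        intro _
        simp only [List.take_zero, List.reverse_nil, List.prod_nil]
        constructor <;> linarith
      | succ j ih =>
        intro hj1
        have hj : j ≤ L.length := Nat.le_of_succ_le hj1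
        obtain ⟨ihl, ihr⟩ := ih hj
        have hd1 := abs_le.mp (hdiffN j hj1)
        have hvr := havoidp (j+1) hj1 ap hapA
        have hvl := havoidp (j+1) hj1 am hamA
        constructor
        · rcases lt_abs.mp hvl with hc | hc
          · linarith
          · linarith
        · rcases lt_abs.mp hvr with hc | hc
          · linarith
          · linarith
    have hfin := keyind L.length le_rfl
    rw [List.take_length] at hfin
    simp only [Set.mem_setOf_eq]
    rw [abs_le]
    have h6 := le_abs_self (phi t 1)
    have h7 := neg_abs_le (phi t 1)
    exact ⟨by linarith [hfin.1], by linarith [hfin.2]⟩
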